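/- Let {φ, u} be any solution of the Kohn–Sham system. Then the shifted electrostatic potential φ₀ = φ − φ̃ ∈ W^{1,2}_0 satisfies the a priori bound ‖φ₀‖_{W^{1,2}_0} ≤ (1/M)(‖D‖_{W^{-1,2}} + γ·N·q), where M is the monotonicity (coercivity) constant of −(d/dx)(ε d/dx) : W^{1,2}_{0,ℝ} → W^{-1,2}_ℝ and γ is the norm of the embedding L^1(0,1) ↪ W^{-1,2}(0,1). -/

import Mathlib

open MeasureTheory Set Filter Topology

noncomputable section

/-- The Sobolev space `W^{1,2}_0(0,1)`: a function together with its derivative,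
square-integrability of both, continuity up to the boundary, and homogeneous
Dirichlet boundary conditions. -/
structure W120 where
  toFun : ℝ → ℂ
  deriv : ℝ → ℂ
  contOn : ContinuousOn toFun (Set.Icc 0 1)
  hasDeriv : ∀ x ∈ Set.Ioo (0:ℝ) 1, HasDerivAt toFun (deriv x) x
  derivMeas : Measurable deriv
  sq_int : IntervalIntegrable (fun x => ‖toFun x‖ ^ 2) volume 0 1
  deriv_sq_int : IntervalIntegrable (fun x => ‖deriv x‖ ^ 2) volume 0 1
  bc0 : toFun 0 = 0
  bc1 : toFun 1 = 0

namespace W120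

/-- The squared `L²(0,1)`-norm. -/
def l2sq (ψ : W120) : ℝ := ∫ x in (0:ℝ)..1, ‖ψ.toFun x‖ ^ 2

/-- The squared `W^{1,2}(0,1)`-norm. -/
def normSq (ψ : W120) : ℝ :=
  (∫ x in (0:ℝ)..1, ‖ψ.toFun x‖ ^ 2) + ∫ x in (0:ℝ)..1, ‖ψ.deriv x‖ ^ 2

end W120

/-- The `L²(0,1)` inner product (conjugate-linear in the first argument). -/
def l2inner (φ ψ : W120) : ℂ :=
  ∫ x in (0:ℝ)..1, (starRingEnd ℂ) (φ.toFun x) * ψ.toFun x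

/-- The sesquilinear form of the Schrödinger operator
`H_V = -(ħ²/2) d/dx (1/m) d/dx + V` with Dirichlet boundary conditions on `(0,1)`. -/
def schForm (hbar : ℝ) (m V : ℝ → ℝ) (v w : W120) : ℂ :=
  (hbar ^ 2 / 2 : ℝ) *
      ∫ x in (0:ℝ)..1, ((m x)⁻¹ : ℂ) * ((starRingEnd ℂ) (v.deriv x) * w.deriv x)
    + ∫ x in (0:ℝ)..1, ((V x : ℝ) : ℂ) * ((starRingEnd ℂ) (v.toFun x) * w.toFun x)

/-- `(lam, ψ)` is a (normalized) Dirichlet eigenpair of `H_V`. -/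
def IsEigenpair (hbar : ℝ) (m V : ℝ → ℝ) (lam : ℝ) (ψ : W120) : Prop :=
  ψ.l2sq = 1 ∧ ∀ w : W120, schForm hbar m V ψ w = (lam : ℂ) * l2inner ψ w

/-- `lam` is the increasing enumeration of all eigenvalues of `H_V`. -/
def IsEigenvalueSeq (hbar : ℝ) (m V : ℝ → ℝ) (lam : ℕ → ℝ) : Prop :=
  StrictMono lam ∧ (∀ l, ∃ ψ : W120, IsEigenpair hbar m V (lam l) ψ) ∧
    ∀ (μ : ℝ) (ψ : W120), IsEigenpair hbar m V μ ψ → ∃ l, lam l = μ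

/-- `(lam, ψ)` is a complete orthonormal eigensystem of `H_V`. -/
def IsEigensystem (hbar : ℝ) (m V : ℝ → ℝ) (lam : ℕ → ℝ) (ψ : ℕ → W120) : Prop :=
  IsEigenvalueSeq hbar m V lam ∧ (∀ l, IsEigenpair hbar m V (lam l) (ψ l)) ∧
    ∀ k l, k ≠ l → l2inner (ψ k) (ψ l) = 0

/-- The `L^∞(0,1)`-norm. -/
def supNorm01 (g : ℝ → ℝ) : ℝ :=
  (eLpNorm g ⊤ (volume.restrict (Set.Ioo (0:ℝ) 1))).toReal

/-- The `L¹(0,1)`-norm. -/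
def l1Norm01 (V : ℝ → ℝ) : ℝ := ∫ x in (0:ℝ)..1, |V x|

/-- The constant `m̲ = max(1, 2‖m‖_∞/ħ²)`. -/
def mbar (hbar : ℝ) (m : ℝ → ℝ) : ℝ := max 1 (2 * supNorm01 m / hbar ^ 2)

/-- The constant `ρ_V = −2‖V‖_{L¹}² m̲ − 1`. -/
def rhoV (hbar : ℝ) (m V : ℝ → ℝ) : ℝ := -2 * l1Norm01 V ^ 2 * mbar hbar m - 1

/-- The effective mass satisfies `m, 1/m ∈ L^∞`, `m > 0`. -/
def MassOK (m : ℝ → ℝ) : Prop :=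
  Measurable m ∧ ∃ a b : ℝ, 0 < a ∧ ∀ x, a ≤ m x ∧ m x ≤ b

/-- A real potential of class `L¹(0,1)`. -/
def PotOK (V : ℝ → ℝ) : Prop := Measurable V ∧ IntervalIntegrable V volume 0 1

/-- The class `𝒟` of distribution functions: continuous, nonnegative, nonincreasing,
and either strictly decreasing up to a point and zero afterwards, or everywhere
positive with `sup_{s≥1} f(s)s² < ∞`. -/
def ClassD (f : ℝ → ℝ) : Prop :=
  Continuous f ∧ (∀ s, 0 ≤ f s) ∧ Antitone f ∧
    ((∃ t : ℝ, StrictAntiOn f (Set.Iic t) ∧ ∀ s, t ≤ s → f s = 0) ∨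
     ((∀ s, 0 < f s) ∧ ∃ C, ∀ s : ℝ, 1 ≤ s → f s * s ^ 2 ≤ C))

/-- The particle density `u(x) = 2 ∑_l f(λ_l − μ)|ψ_l(x)|²`. -/
def density (f : ℝ → ℝ) (lam : ℕ → ℝ) (μ : ℝ) (ψ : ℕ → W120) (x : ℝ) : ℝ :=
  2 * ∑' l : ℕ, f (lam l - μ) * ‖(ψ l).toFun x‖ ^ 2

/-- The derivative of the particle density. -/
def densityDeriv (f : ℝ → ℝ) (lam : ℕ → ℝ) (μ : ℝ) (ψ : ℕ → W120) (x : ℝ) : ℝ :=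
  2 * ∑' l : ℕ, f (lam l - μ) *
    (2 * ((starRingEnd ℂ) ((ψ l).toFun x) * (ψ l).deriv x).re)

end

/-- The affine correction `φ̃` for inhomogeneous Dirichlet data. -/
noncomputable def phiTilde (ε : ℝ → ℝ) (v0 v1 : ℝ) (x : ℝ) : ℝ :=
  v0 + (v1 - v0) * (∫ t in (0:ℝ)..x, (ε t)⁻¹) / ∫ t in (0:ℝ)..1, (ε t)⁻¹

/-- `u` is the particle density `N_f(V)` of the potential `V` with particle number
`N`. -/
def IsParticleDensity (hbar : ℝ) (m : ℝ → ℝ) (f : ℝ → ℝ) (N : ℝ)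
    (V u : ℝ → ℝ) : Prop :=
  ∃ (lam : ℕ → ℝ) (ψ : ℕ → W120) (μ : ℝ),
    IsEigensystem hbar m V lam ψ ∧
    Summable (fun l : ℕ => f (lam l - μ)) ∧
    2 * ∑' l : ℕ, f (lam l - μ) = N ∧
    ∀ x, u x = density f lam μ ψ x

/-- An auxiliary nonzero element of `W^{1,2}_0`: `x ↦ x(1-x)`. -/
noncomputable def w0 : W120 where
  toFun := fun x => ((x * (1 - x) : ℝ) : ℂ)
  deriv := fun x => ((1 - 2 * x : ℝ) : ℂ)
  contOn := (Complex.continuous_ofReal.comp (by continuity)).continuousOn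
  hasDeriv := fun x _ => by
    have h : HasDerivAt (fun x : ℝ => x * (1 - x)) (1 - 2 * x) x := by
      have := (hasDerivAt_id x).mul ((hasDerivAt_const x (1:ℝ)).sub (hasDerivAt_id x))
      convert this using 1 <;> first | rfl | (simp; ring)
    exact h.ofReal_comp
  derivMeas := Complex.measurable_ofReal.comp (by fun_prop)
  sq_int := Continuous.intervalIntegrable (by continuity) 0 1
  deriv_sq_int := Continuous.intervalIntegrable (by continuity) 0 1
  bc0 := by norm_num
  bc1 := by norm_num

theorem w0_normSq_pos : 0 < w0.normSq := by
  have h1 : 0 < ∫ x in (0:ℝ)..1, ‖w0.toFun x‖ ^ 2 := by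
    refine intervalIntegral.intervalIntegral_pos_of_pos_on
      (((Complex.continuous_ofReal.comp (by continuity :
          Continuous fun x : ℝ => x * (1 - x))).norm.pow 2).intervalIntegrable 0 1)
      (fun x hx => ?_) one_pos
    have hx0 : 0 < x * (1 - x) := mul_pos hx.1 (by linarith [hx.2])
    show 0 < ‖((x * (1 - x) : ℝ) : ℂ)‖ ^ 2
    rw [Complex.norm_real]
    exact pow_pos (abs_pos.2 hx0.ne') 2
  have h2 : 0 ≤ ∫ x in (0:ℝ)..1, ‖w0.deriv x‖ ^ 2 :=
    intervalIntegral.integral_nonneg zero_le_one fun x _ => by positivity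
  have : w0.normSq = (∫ x in (0:ℝ)..1, ‖w0.toFun x‖ ^ 2)
      + ∫ x in (0:ℝ)..1, ‖w0.deriv x‖ ^ 2 := rfl
  linarith

/-- Corollary 5.4 (a priori estimate): if `{φ̃ + φ, u}` solves the Kohn–Sham system,
then `‖φ‖_{W^{1,2}_0} ≤ (1/M)(‖D‖_{W^{-1,2}} + γ N q)`, where `M` is the monotonicity
constant of `−(d/dx) ε (d/dx)` and `γ` the norm of the embedding `L¹ ↪ W^{-1,2}`.
The right-hand side `D = d₀ + d₁'` with `d₀, d₁ ∈ L²` has `W^{-1,2}`-norm at most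
`CD`. -/
theorem stmt_16 (hbar : ℝ) (hhbar : 0 < hbar) (m : ℝ → ℝ) (hm : MassOK m)
    (f : ℝ → ℝ) (hf : ClassD f) (N : ℝ) (hN : 1 ≤ N)
    (ε : ℝ → ℝ) (hεmeas : Measurable ε) (c Cu : ℝ) (hc : 0 < c)
    (hεlow : ∀ x, c ≤ ε x) (hεupp : ∀ x, ε x ≤ Cu)
    (q : ℝ) (hq : 0 < q) (ΔE : ℝ → ℝ) (hΔE : PotOK ΔE) (v0 v1 : ℝ)
    (Vxc : (ℝ → ℝ) → ℝ → ℝ) (hVxc : ∀ v : ℝ → ℝ, PotOK (Vxc v))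
    (d0 d1 : ℝ → ℝ) (hd0m : Measurable d0) (hd1m : Measurable d1)
    (hd0 : IntervalIntegrable (fun x => (d0 x) ^ 2) MeasureTheory.volume 0 1)
    (hd1 : IntervalIntegrable (fun x => (d1 x) ^ 2) MeasureTheory.volume 0 1)
    -- `M` is a monotonicity (coercivity) constant of the Poisson operator:
    (M : ℝ) (hM : 0 < M)
    (hMcoer : ∀ w : W120, M * w.normSq ≤ ∫ x in (0:ℝ)..1, ε x * ‖w.deriv x‖ ^ 2)
    -- `γ` is the norm of the embedding `L¹(0,1) ↪ W^{-1,2}(0,1)`: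
    (γ : ℝ)
    (hγ : ∀ g : ℝ → ℝ, IntervalIntegrable g MeasureTheory.volume 0 1 →
      ∀ w : W120, ‖∫ x in (0:ℝ)..1, ((g x : ℝ) : ℂ) * (starRingEnd ℂ) (w.toFun x)‖ ≤
        γ * (∫ x in (0:ℝ)..1, |g x|) * Real.sqrt w.normSq)
    -- `CD` bounds the `W^{-1,2}`-norm of `D`:
    (CD : ℝ)
    (hCD : ∀ w : W120,
      ‖(∫ x in (0:ℝ)..1, ((d0 x : ℝ) : ℂ) * (starRingEnd ℂ) (w.toFun x))
        + ∫ x in (0:ℝ)..1, ((d1 x : ℝ) : ℂ) * (starRingEnd ℂ) (w.deriv x)‖ ≤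
        CD * Real.sqrt w.normSq)
    -- `{φ̃ + φ, u}` is a solution of the Kohn–Sham system:
    (φ : W120) (u : ℝ → ℝ) (hreal : ∀ x, (φ.toFun x).im = 0)
    (hu : IsParticleDensity hbar m f N
      (fun x => ΔE x + Vxc u x - q * phiTilde ε v0 v1 x - q * (φ.toFun x).re) u)
    (huint : IntervalIntegrable u MeasureTheory.volume 0 1)
    (heq : ∀ w : W120,
      (∫ x in (0:ℝ)..1, ((ε x : ℝ) : ℂ) * (φ.deriv x * (starRingEnd ℂ) (w.deriv x)))
        + (q : ℂ) * ∫ x in (0:ℝ)..1, ((u x : ℝ) : ℂ) * (starRingEnd ℂ) (w.toFun x)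
      = (∫ x in (0:ℝ)..1, ((d0 x : ℝ) : ℂ) * (starRingEnd ℂ) (w.toFun x))
        + ∫ x in (0:ℝ)..1, ((d1 x : ℝ) : ℂ) * (starRingEnd ℂ) (w.deriv x)) :
    Real.sqrt φ.normSq ≤ (1 / M) * (CD + γ * N * q) := by
  classical
  set s := Real.sqrt φ.normSq with hs
  have hs0 : 0 ≤ s := Real.sqrt_nonneg _
  have hns : 0 ≤ φ.normSq :=
    add_nonneg (intervalIntegral.integral_nonneg zero_le_one fun x _ => by positivity)
      (intervalIntegral.integral_nonneg zero_le_one fun x _ => by positivity)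
  have hsq : s ^ 2 = φ.normSq := Real.sq_sqrt hns
  -- CD and γ are nonnegative
  have hw0 : (0:ℝ) < Real.sqrt w0.normSq := Real.sqrt_pos.2 w0_normSq_pos
  have hCD0 : 0 ≤ CD := by
    have h := (norm_nonneg _).trans (hCD w0)
    nlinarith
  have hγ0 : 0 ≤ γ := by
    have h := hγ (fun _ => (1:ℝ)) intervalIntegrable_const w0
    simp only [abs_one, intervalIntegral.integral_const, smul_eq_mul, sub_zero, mul_one] at h
    have h2 := (norm_nonneg _).trans h
    nlinarith
  -- the integral of |u| equals N
  obtain ⟨lam, ψl, μ, hsys, hsum, hNeq, hux⟩ := hu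
  have hf0 : ∀ t, 0 ≤ f t := hf.2.1
  have hnorm1 : ∀ l, (ψl l).l2sq = 1 := fun l => (hsys.2.1 l).1
  have hupos : ∀ x, 0 ≤ u x := fun x => by
    rw [hux x]
    exact mul_nonneg (by norm_num)
      (tsum_nonneg fun l => mul_nonneg (hf0 _) (by positivity))
  have hintu : ∫ x in (0:ℝ)..1, |u x| = N := by
    have h1 : ∫ x in (0:ℝ)..1, |u x| = ∫ x in (0:ℝ)..1, u x :=
      intervalIntegral.integral_congr fun x _ => abs_of_nonneg (hupos x)
    set ν := MeasureTheory.volume.restrict (Set.Ioc (0:ℝ) 1) with hν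
    set F : ℕ → ℝ → ℝ := fun l x => f (lam l - μ) * ‖(ψl l).toFun x‖ ^ 2 with hF
    have hFi : ∀ l, MeasureTheory.Integrable (F l) ν := fun l =>
      ((ψl l).sq_int.1).const_mul _
    have hFint : ∀ l, ∫ x, F l x ∂ν = f (lam l - μ) := by
      intro l
      rw [MeasureTheory.integral_const_mul]
      have : ∫ x, ‖(ψl l).toFun x‖ ^ 2 ∂ν = (ψl l).l2sq :=
        (intervalIntegral.integral_of_le zero_le_one).symm
      rw [this, hnorm1 l, mul_one]
    have hFnorm : ∀ l, ∫ x, ‖F l x‖ ∂ν = f (lam l - μ) := by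
      intro l
      have : ∀ x, ‖F l x‖ = F l x := fun x =>
        Real.norm_of_nonneg (mul_nonneg (hf0 _) (by positivity))
      simp only [this]
      exact hFint l
    have hsum' : Summable (fun l => ∫ x, ‖F l x‖ ∂ν) := by
      simpa only [hFnorm] using hsum
    have hinter := MeasureTheory.integral_tsum_of_summable_integral_norm hFi hsum'
    have h2 : ∫ x in (0:ℝ)..1, u x = 2 * ∑' l, f (lam l - μ) := by
      rw [intervalIntegral.integral_of_le zero_le_one]
      have hux' : ∀ x, u x = 2 * ∑' l, F l x := fun x => hux x
      calc ∫ x, u x ∂ν = ∫ x, 2 * ∑' l, F l x ∂ν := by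
            exact MeasureTheory.integral_congr_ae (Filter.Eventually.of_forall hux')
        _ = 2 * ∫ x, ∑' l, F l x ∂ν := MeasureTheory.integral_const_mul _ _
        _ = 2 * ∑' l, ∫ x, F l x ∂ν := by rw [hinter]
        _ = 2 * ∑' l, f (lam l - μ) := by simp only [hFint]
    rw [h1, h2, hNeq]
  -- key energy identity and estimate
  have hint1 : ∫ x in (0:ℝ)..1, ((ε x : ℝ) : ℂ) * (φ.deriv x * (starRingEnd ℂ) (φ.deriv x))
      = ((∫ x in (0:ℝ)..1, ε x * ‖φ.deriv x‖ ^ 2 : ℝ) : ℂ) := by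
    rw [← intervalIntegral.integral_ofReal]
    refine intervalIntegral.integral_congr fun x _ => ?_
    rw [Complex.mul_conj]
    norm_cast
    rw [Complex.sq_norm]
  have heqφ := heq φ
  rw [hint1] at heqφ
  set Iu : ℂ := ∫ x in (0:ℝ)..1, ((u x : ℝ) : ℂ) * (starRingEnd ℂ) (φ.toFun x) with hIu
  set D : ℂ := (∫ x in (0:ℝ)..1, ((d0 x : ℝ) : ℂ) * (starRingEnd ℂ) (φ.toFun x))
      + ∫ x in (0:ℝ)..1, ((d1 x : ℝ) : ℂ) * (starRingEnd ℂ) (φ.deriv x) with hD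
  set E : ℝ := ∫ x in (0:ℝ)..1, ε x * ‖φ.deriv x‖ ^ 2 with hE
  have hEeq : (E : ℂ) = D - (q : ℂ) * Iu := eq_sub_of_add_eq heqφ
  have hEre : E = (D - (q : ℂ) * Iu).re := by
    rw [← hEeq, Complex.ofReal_re]
  have hEle : E ≤ ‖D‖ + q * ‖Iu‖ := by
    rw [hEre]
    calc (D - (q : ℂ) * Iu).re ≤ ‖D - (q : ℂ) * Iu‖ := Complex.re_le_norm _
      _ ≤ ‖D‖ + ‖(q : ℂ) * Iu‖ := norm_sub_le _ _
      _ = ‖D‖ + q * ‖Iu‖ := by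
          rw [norm_mul, Complex.norm_real, Real.norm_of_nonneg hq.le]
  have hDle : ‖D‖ ≤ CD * s := hCD φ
  have hIule : ‖Iu‖ ≤ γ * N * s := by
    have h := hγ u huint φ
    rw [hintu] at h
    exact h
  have hcoe := hMcoer φ
  -- combine: M * s^2 ≤ (CD + γ * N * q) * s
  have hkey : M * s ^ 2 ≤ (CD + γ * N * q) * s := by
    have h1 : M * φ.normSq ≤ E := hcoe
    nlinarith
  have hK : 0 ≤ CD + γ * N * q := by
    have : 0 ≤ γ * N * q := mul_nonneg (mul_nonneg hγ0 (by linarith)) hq.le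
    linarith
  rcases eq_or_lt_of_le hs0 with h0 | h0
  · rw [← h0]
    exact mul_nonneg (by positivity) hK
  · have hMs : M * s ≤ CD + γ * N * q := by
      have := le_of_mul_le_mul_right (by nlinarith : M * s * s ≤ (CD + γ * N * q) * s) h0
      linarith
    rw [one_div_mul_eq_div]
    exact (le_div_iff₀ hM).2 (by linarith)
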